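/- Let A be a T-brace and let a ∈ ζ₂(⋆,A). If a has finite additive order and the additive group of ζ₂(⋆,A) is not periodic, then x ⋆ a ∈ ⟨a ⋆ a⟩ and a ⋆ x ∈ ⟨a ⋆ a⟩ for all elements x ∈ A. -/

import Mathlib

/-!
Basic theory of left braces (skew left braces of abelian type), following
Dixon–Kurdachenko–Subbotin, "On the structure of braces whose subideals are ideals".
-/

universe u v

/-- A left brace: an abelian group `(A,+)`, a group `(A,·)`, satisfying
`a(b+c) = ab + ac - a`.  (The additive and multiplicative identities then coincide.) -/
class LeftBrace (A : Type u) extends AddCommGroup A, Group A where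
  mul_add_eq : ∀ a b c : A, a * (b + c) = a * b + a * c - a

namespace LeftBrace

variable {A : Type u} [LeftBrace A]

/-- The star operation `a ⋆ b = ab - a - b`. -/
def bstar (a b : A) : A := a * b - a - b

/-- A subset of a left brace is a subbrace if it is closed under the additive-group
and multiplicative-group operations (equivalently, it is a left brace under the
restricted operations). -/
structure IsSubbrace (S : Set A) : Prop where
  zero_mem : (0 : A) ∈ S
  add_mem : ∀ {a b : A}, a ∈ S → b ∈ S → a + b ∈ S
  neg_mem : ∀ {a : A}, a ∈ S → -a ∈ S
  mul_mem : ∀ {a b : A}, a ∈ S → b ∈ S → a * b ∈ S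
  inv_mem : ∀ {a : A}, a ∈ S → a⁻¹ ∈ S

/-- `I` is an ideal of the subbrace `J`: `I ⊆ J`, both are subbraces, and
`a ⋆ z, z ⋆ a ∈ I` for all `a ∈ J`, `z ∈ I`. -/
structure IsIdealIn (I J : Set A) : Prop where
  subset : I ⊆ J
  subbrace : IsSubbrace I
  ambient_subbrace : IsSubbrace J
  star_mem_left : ∀ a ∈ J, ∀ z ∈ I, bstar a z ∈ I
  star_mem_right : ∀ a ∈ J, ∀ z ∈ I, bstar z a ∈ I

/-- `I` is an ideal of the brace `A`. -/
def IsIdeal (I : Set A) : Prop := IsIdealIn I (Set.univ : Set A)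

/-- `A` is a T-brace if being an ideal is a transitive relation: an ideal of an
ideal of `A` is an ideal of `A`. -/
def IsTBrace (A : Type u) [LeftBrace A] : Prop :=
  ∀ I J : Set A, IsIdealIn I J → IsIdeal J → IsIdeal I

/-- The `⋆`-center `ζ(⋆,A) = {a | a ⋆ x = x ⋆ a = 0 for all x}`. -/
def starCenter (A : Type u) [LeftBrace A] : Set A :=
  {a : A | ∀ x : A, bstar a x = 0 ∧ bstar x a = 0}

/-- The preimage in `A` of the `⋆`-center of the quotient of `A` by (the ideal) `S`:
`a` belongs to it iff `a ⋆ x ∈ S` and `x ⋆ a ∈ S` for every `x ∈ A`. -/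
def nextCenter (A : Type u) [LeftBrace A] (S : Set A) : Set A :=
  {a : A | ∀ x : A, bstar a x ∈ S ∧ bstar x a ∈ S}

/-- The upper `⋆`-central series, indexed by naturals:
`ζ₀(⋆,A) = 0` and `ζ_{n+1}(⋆,A)/ζ_n(⋆,A) = ζ(⋆, A/ζ_n(⋆,A))`. -/
def zetaNat (A : Type u) [LeftBrace A] : ℕ → Set A
  | 0 => ({0} : Set A)
  | n + 1 => nextCenter A (zetaNat A n)

/-- The upper `⋆`-central series, indexed by ordinals (unions at limit ordinals). -/
noncomputable def zetaOrd (A : Type u) [LeftBrace A] (o : Ordinal.{v}) : Set A :=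
  Ordinal.limitRecOn o (({0} : Set A))
    (fun _ ih => nextCenter A ih)
    (fun o _ ih => ⋃ (o' : Ordinal) (h : o' < o), ih o' h)

/-- The upper `⋆`-hypercenter `ζ_∞(⋆,A)`: the final (stable) term of the upper
`⋆`-central series, i.e. the union of all its terms. -/
noncomputable def starHypercenter (A : Type u) [LeftBrace A] : Set A :=
  ⋃ o : Ordinal.{u}, zetaOrd A o

/-- `A` is `⋆`-hypercentral if `A = ζ_γ(⋆,A)` for some ordinal `γ`. -/
def IsStarHypercentral (A : Type u) [LeftBrace A] : Prop :=
  ∃ γ : Ordinal.{u}, zetaOrd A γ = (Set.univ : Set A)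

/-- `K ⋆ L`: the additive subgroup of `(A,+)` generated by all `x ⋆ y`, `x ∈ K`, `y ∈ L`. -/
def setStar (K L : Set A) : AddSubgroup A :=
  AddSubgroup.closure {z : A | ∃ x ∈ K, ∃ y ∈ L, z = bstar x y}

/-- `rightStarSeries A n = A^{(n+1)}`, where `A^{(1)} = A` and `A^{(n+1)} = A^{(n)} ⋆ A`. -/
def rightStarSeries (A : Type u) [LeftBrace A] : ℕ → Set A
  | 0 => (Set.univ : Set A)
  | n + 1 => ((setStar (rightStarSeries A n) (Set.univ : Set A) : AddSubgroup A) : Set A)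

/-- `leftStarSeries A n = A^{n+1}`, where `A^1 = A` and `A^{n+1} = A ⋆ A^n`. -/
def leftStarSeries (A : Type u) [LeftBrace A] : ℕ → Set A
  | 0 => (Set.univ : Set A)
  | n + 1 => ((setStar (Set.univ : Set A) (leftStarSeries A n) : AddSubgroup A) : Set A)

/-- `A` is Smoktunowicz-nilpotent if `A^{(n)} = A^k = 0` for some naturals `n, k`. -/
def IsSmoktunowiczNilpotent (A : Type u) [LeftBrace A] : Prop :=
  ∃ n k : ℕ, rightStarSeries A n = ({0} : Set A) ∧ leftStarSeries A k = ({0} : Set A)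

/-- The subbrace generated by a subset `M`: the intersection of all subbraces containing `M`. -/
def braceClosure (M : Set A) : Set A := ⋂₀ {S : Set A | IsSubbrace S ∧ M ⊆ S}

end LeftBrace
namespace LeftBrace

variable {A : Type u} [LeftBrace A]

private lemma mul_zero' (a : A) : a * 0 = a := by
  have h := mul_add_eq a 0 0
  rw [add_zero] at h
  have h2 : a * 0 + (a * 0 - a) = a * 0 + 0 := by
    rw [add_zero, ← add_sub_assoc, ← h]
  exact sub_eq_zero.mp (add_left_cancel h2)

private lemma one_eq_zero : (1 : A) = 0 := by
  have h := mul_zero' (1 : A)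
  rw [one_mul] at h
  exact h.symm

private lemma zero_mul' (a : A) : (0 : A) * a = a := by
  rw [← one_eq_zero, one_mul]

private lemma mul_eq' (a b : A) : a * b = a + b + bstar a b := by
  unfold bstar; abel

private lemma bstar_add_right (a b c : A) : bstar a (b + c) = bstar a b + bstar a c := by
  unfold bstar; rw [mul_add_eq]; abel

private lemma bstar_zero_right (a : A) : bstar a 0 = 0 := by
  unfold bstar; rw [mul_zero']; abel

private lemma bstar_zero_left (a : A) : bstar 0 a = 0 := by
  unfold bstar; rw [zero_mul']; abel

private def bstarHom (a : A) : A →+ A :=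
  AddMonoidHom.mk' (fun y => bstar a y) (bstar_add_right a)

private lemma bstar_neg_right (a b : A) : bstar a (-b) = -(bstar a b) :=
  map_neg (bstarHom a) b

private lemma bstar_zsmul_right (a : A) (m : ℤ) (b : A) : bstar a (m • b) = m • bstar a b :=
  map_zsmul (bstarHom a) m b

private lemma mul_sub_eq (a b c : A) : a * (b - c) = a * b - a * c + a := by
  have h := mul_add_eq a (b - c) c
  have h2 : b - c + c = b := by abel
  rw [h2] at h
  rw [h]; abel

private lemma bstar_mul_left (a b c : A) :
    bstar (a * b) c = bstar a (bstar b c) + bstar b c + bstar a c := by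
  unfold bstar
  rw [mul_assoc, mul_sub_eq, mul_sub_eq]
  abel

private lemma mem_z1 {s : A} :
    s ∈ zetaNat A 1 ↔ ∀ x : A, bstar s x = 0 ∧ bstar x s = 0 := Iff.rfl

private lemma bstar_left_z1 {s : A} (hs : s ∈ zetaNat A 1) (x : A) : bstar s x = 0 :=
  (mem_z1.mp hs x).1

private lemma bstar_right_z1 {s : A} (hs : s ∈ zetaNat A 1) (x : A) : bstar x s = 0 :=
  (mem_z1.mp hs x).2

private lemma zero_mem_z1 : (0 : A) ∈ zetaNat A 1 :=
  mem_z1.mpr fun x => ⟨bstar_zero_left x, bstar_zero_right x⟩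

private lemma add_mem_z1 {s t : A} (hs : s ∈ zetaNat A 1) (ht : t ∈ zetaNat A 1) :
    s + t ∈ zetaNat A 1 := by
  rw [mem_z1]; intro x
  constructor
  · have hst : s + t = s * t := by rw [mul_eq', bstar_left_z1 hs, add_zero]
    rw [hst, bstar_mul_left, bstar_left_z1 hs, bstar_left_z1 ht, bstar_left_z1 hs]
    simp
  · rw [bstar_add_right, bstar_right_z1 hs, bstar_right_z1 ht, add_zero]

private lemma neg_mem_z1 {s : A} (hs : s ∈ zetaNat A 1) : -s ∈ zetaNat A 1 := by
  rw [mem_z1]; intro x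
  constructor
  · have h1 : s * (-s) = 1 := by
      rw [mul_eq', bstar_neg_right, bstar_left_z1 hs, one_eq_zero]
      abel
    have h2 : -s = s⁻¹ := eq_inv_of_mul_eq_one_right h1
    rw [h2]
    have h3 : bstar (s * s⁻¹) x = 0 := by
      rw [mul_inv_cancel, one_eq_zero, bstar_zero_left]
    rw [bstar_mul_left] at h3
    rw [bstar_left_z1 hs, bstar_left_z1 hs] at h3
    simpa using h3
  · rw [bstar_neg_right, bstar_right_z1 hs, neg_zero]

private def Z1' (A : Type u) [LeftBrace A] : AddSubgroup A where
  carrier := zetaNat A 1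
  zero_mem' := zero_mem_z1
  add_mem' := fun hs ht => add_mem_z1 hs ht
  neg_mem' := fun hs => neg_mem_z1 hs

private lemma zsmul_mem_z1 {s : A} (hs : s ∈ zetaNat A 1) (m : ℤ) :
    m • s ∈ zetaNat A 1 :=
  AddSubgroup.zsmul_mem (Z1' A) hs m

private lemma mem_z2 {a : A} :
    a ∈ zetaNat A 2 ↔ ∀ x : A, bstar a x ∈ zetaNat A 1 ∧ bstar x a ∈ zetaNat A 1 := Iff.rfl

private lemma bstar_memz1_left {a : A} (ha : a ∈ zetaNat A 2) (x : A) :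
    bstar a x ∈ zetaNat A 1 := (mem_z2.mp ha x).1

private lemma bstar_memz1_right {a : A} (ha : a ∈ zetaNat A 2) (x : A) :
    bstar x a ∈ zetaNat A 1 := (mem_z2.mp ha x).2

private lemma z1_subset_z2 {s : A} (hs : s ∈ zetaNat A 1) : s ∈ zetaNat A 2 :=
  mem_z2.mpr fun x =>
    ⟨by rw [bstar_left_z1 hs]; exact zero_mem_z1,
     by rw [bstar_right_z1 hs]; exact zero_mem_z1⟩

private lemma bstar_z1_add_left {s : A} (hs : s ∈ zetaNat A 1) (w x : A) :
    bstar (s + w) x = bstar w x := by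
  have hsw : s + w = s * w := by rw [mul_eq', bstar_left_z1 hs, add_zero]
  rw [hsw, bstar_mul_left, bstar_left_z1 hs, bstar_left_z1 hs, zero_add, add_zero]

private lemma bstar_add_left_z2 {a b : A} (ha : a ∈ zetaNat A 2) (hb : b ∈ zetaNat A 2)
    (x : A) : bstar (a + b) x = bstar a x + bstar b x := by
  have key : a + b = -(bstar a b) + a * b := by rw [mul_eq']; abel
  rw [key, bstar_z1_add_left (neg_mem_z1 (bstar_memz1_left ha b)), bstar_mul_left,
    bstar_right_z1 (bstar_memz1_left hb x) a]
  abel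

private lemma mul_inv_zero_z2 (a : A) : a + a⁻¹ + bstar a a⁻¹ = 0 := by
  rw [← mul_eq', mul_inv_cancel]
  exact one_eq_zero

private lemma bstar_inv_right_z2 {a : A} (ha : a ∈ zetaNat A 2) :
    bstar a a⁻¹ = -(bstar a a) := by
  have h0 := mul_inv_zero_z2 a
  have hinv : a⁻¹ = -(a + bstar a a⁻¹) := by
    refine eq_neg_of_add_eq_zero_left ?_
    rw [← h0]; abel
  have hc : bstar a a⁻¹ = -(bstar a a + bstar a (bstar a a⁻¹)) := by
    conv_lhs => rw [hinv]
    rw [bstar_neg_right, bstar_add_right]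
  rw [bstar_right_z1 (bstar_memz1_left ha a⁻¹) a, add_zero] at hc
  exact hc

private lemma inv_eq_z2 {a : A} (ha : a ∈ zetaNat A 2) : a⁻¹ = -a + bstar a a := by
  have h0 := mul_inv_zero_z2 a
  rw [bstar_inv_right_z2 ha] at h0
  have h1 : a⁻¹ + (a + -(bstar a a)) = 0 := by rw [← h0]; abel
  have := eq_neg_of_add_eq_zero_left h1
  rw [this]; abel

private lemma bstar_inv_left_z2 {a : A} (ha : a ∈ zetaNat A 2) (x : A) :
    bstar a⁻¹ x = -(bstar a x) := by
  have h3 : bstar a (bstar a⁻¹ x) + bstar a⁻¹ x + bstar a x = 0 := by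
    rw [← bstar_mul_left, mul_inv_cancel, one_eq_zero, bstar_zero_left]
  have h4 : bstar a⁻¹ x = -(bstar a (bstar a⁻¹ x) + bstar a x) := by
    refine eq_neg_of_add_eq_zero_left ?_
    rw [← h3]; abel
  have hwz1 : bstar a⁻¹ x ∈ zetaNat A 1 := by
    rw [h4]
    exact neg_mem_z1 (add_mem_z1 (bstar_memz1_left ha _) (bstar_memz1_left ha x))
  rw [bstar_right_z1 hwz1 a, zero_add] at h3
  exact eq_neg_of_add_eq_zero_left h3

private lemma bstar_neg_left_z2 {a : A} (ha : a ∈ zetaNat A 2) (x : A) :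
    bstar (-a) x = -(bstar a x) := by
  have hs : a * (-a) = -(bstar a a) := by rw [mul_eq', bstar_neg_right]; abel
  have hsz1 : -(bstar a a) ∈ zetaNat A 1 := neg_mem_z1 (bstar_memz1_left ha a)
  have hna : -a = a⁻¹ * -(bstar a a) := by rw [← hs, inv_mul_cancel_left]
  rw [hna, bstar_mul_left, bstar_left_z1 hsz1, bstar_zero_right,
    bstar_inv_left_z2 ha]
  abel

private lemma add_mem_z2 {a b : A} (ha : a ∈ zetaNat A 2) (hb : b ∈ zetaNat A 2) :
    a + b ∈ zetaNat A 2 :=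
  mem_z2.mpr fun x =>
    ⟨by rw [bstar_add_left_z2 ha hb]
        exact add_mem_z1 (bstar_memz1_left ha x) (bstar_memz1_left hb x),
     by rw [bstar_add_right]
        exact add_mem_z1 (bstar_memz1_right ha x) (bstar_memz1_right hb x)⟩

private lemma neg_mem_z2 {a : A} (ha : a ∈ zetaNat A 2) : -a ∈ zetaNat A 2 :=
  mem_z2.mpr fun x =>
    ⟨by rw [bstar_neg_left_z2 ha]; exact neg_mem_z1 (bstar_memz1_left ha x),
     by rw [bstar_neg_right]; exact neg_mem_z1 (bstar_memz1_right ha x)⟩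

private def Z2' (A : Type u) [LeftBrace A] : AddSubgroup A where
  carrier := zetaNat A 2
  zero_mem' := z1_subset_z2 zero_mem_z1
  add_mem' := fun hs ht => add_mem_z2 hs ht
  neg_mem' := fun hs => neg_mem_z2 hs

private lemma zsmul_mem_z2 {a : A} (ha : a ∈ zetaNat A 2) (m : ℤ) :
    m • a ∈ zetaNat A 2 :=
  AddSubgroup.zsmul_mem (Z2' A) ha m

private lemma bstar_zsmul_left_z2 {a : A} (ha : a ∈ zetaNat A 2) (m : ℤ) (x : A) :
    bstar (m • a) x = m • bstar a x := by
  induction m using Int.induction_on with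
  | zero => rw [zero_zsmul, zero_zsmul, bstar_zero_left]
  | succ k ih =>
    have hk : ((k : ℤ)) • a ∈ zetaNat A 2 := zsmul_mem_z2 ha k
    rw [add_zsmul, one_zsmul, bstar_add_left_z2 hk ha, ih, add_zsmul, one_zsmul]
  | pred k ih =>
    have hk : (-(k : ℤ)) • a ∈ zetaNat A 2 := zsmul_mem_z2 ha _
    rw [show -(k : ℤ) - 1 = -(k : ℤ) + -1 by ring, add_zsmul, add_zsmul,
      neg_one_zsmul, neg_one_zsmul, bstar_add_left_z2 hk (neg_mem_z2 ha),
      bstar_neg_left_z2 ha, ih]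

private lemma zsmul_eq_zero' {b : A} (hb : ¬ IsOfFinAddOrder b) {m : ℤ}
    (h : m • b = 0) : m = 0 := by
  by_contra hm
  apply hb
  rw [isOfFinAddOrder_iff_nsmul_eq_zero]
  refine ⟨m.natAbs, Int.natAbs_pos.mpr hm, ?_⟩
  have h2 : ((m.natAbs : ℤ)) • b = 0 := by
    rcases Int.natAbs_eq m with he | he
    · rw [← he, h]
    · rw [show ((m.natAbs : ℤ)) = -m by omega, neg_zsmul, h, neg_zero]
  rw [natCast_zsmul] at h2
  exact h2

section Ideal

variable {z : A}

private lemma bstar_affL (hz : z ∈ zetaNat A 2) (p : ℤ) {s : A}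
    (hs : s ∈ zetaNat A 1) (v : A) : bstar (p • z + s) v = p • bstar z v := by
  rw [add_comm, bstar_z1_add_left hs, bstar_zsmul_left_z2 hz]

private lemma bstar_affR (x : A) (p : ℤ) {s : A} (hs : s ∈ zetaNat A 1) :
    bstar x (p • z + s) = p • bstar x z := by
  rw [bstar_add_right, bstar_right_z1 hs, add_zero, bstar_zsmul_right]

private lemma star_mem_cyclic (hT : IsTBrace A) (hz : z ∈ zetaNat A 2) (x : A) :
    (∃ p q : ℤ, bstar x z = p • z + q • bstar z z) ∧
    (∃ p q : ℤ, bstar z x = p • z + q • bstar z z) := by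
  have hwZ1 : bstar z z ∈ zetaNat A 1 := bstar_memz1_left hz z
  have hwq : ∀ q : ℤ, q • bstar z z ∈ zetaNat A 1 := fun q => zsmul_mem_z1 hwZ1 q
  have hIJ : {y : A | ∃ p q : ℤ, y = p • z + q • bstar z z} ⊆
      {y : A | ∃ (p : ℤ) (s : A), s ∈ zetaNat A 1 ∧ y = p • z + s} := by
    rintro y ⟨p, q, rfl⟩
    exact ⟨p, q • bstar z z, hwq q, rfl⟩
  have hJZ2 : ∀ y ∈ {y : A | ∃ (p : ℤ) (s : A), s ∈ zetaNat A 1 ∧ y = p • z + s},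
      y ∈ zetaNat A 2 := by
    rintro y ⟨p, s, hs, rfl⟩
    exact add_mem_z2 (zsmul_mem_z2 hz p) (z1_subset_z2 hs)
  -- bstar of two J-forms
  have hbb : ∀ (p : ℤ) (s : A), s ∈ zetaNat A 1 → ∀ (p' : ℤ) (s' : A), s' ∈ zetaNat A 1 →
      bstar (p • z + s) (p' • z + s') = (p * p') • bstar z z := by
    intro p s hs p' s' hs'
    rw [bstar_affL hz p hs, bstar_affR z p' hs', mul_zsmul]
  have hIsub : IsSubbrace {y : A | ∃ p q : ℤ, y = p • z + q • bstar z z} := by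
    refine ⟨⟨0, 0, by simp⟩, ?_, ?_, ?_, ?_⟩
    · rintro u v ⟨p, q, rfl⟩ ⟨p', q', rfl⟩
      exact ⟨p + p', q + q', by rw [add_zsmul, add_zsmul]; abel⟩
    · rintro u ⟨p, q, rfl⟩
      exact ⟨-p, -q, by rw [neg_zsmul, neg_zsmul]; abel⟩
    · rintro u v ⟨p, q, rfl⟩ ⟨p', q', rfl⟩
      refine ⟨p + p', q + q' + p * p', ?_⟩
      rw [mul_eq', hbb p _ (hwq q) p' _ (hwq q'), add_zsmul, add_zsmul, add_zsmul]
      abel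
    · rintro u ⟨p, q, rfl⟩
      have huZ2 : p • z + q • bstar z z ∈ zetaNat A 2 := hJZ2 _ (hIJ ⟨p, q, rfl⟩)
      refine ⟨-p, p * p - q, ?_⟩
      rw [inv_eq_z2 huZ2, hbb p _ (hwq q) p _ (hwq q), neg_zsmul, sub_zsmul]
      abel
  have hJsub : IsSubbrace {y : A | ∃ (p : ℤ) (s : A), s ∈ zetaNat A 1 ∧ y = p • z + s} := by
    refine ⟨⟨0, 0, zero_mem_z1, by simp⟩, ?_, ?_, ?_, ?_⟩
    · rintro u v ⟨p, s, hs, rfl⟩ ⟨p', s', hs', rfl⟩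
      exact ⟨p + p', s + s', add_mem_z1 hs hs', by rw [add_zsmul]; abel⟩
    · rintro u ⟨p, s, hs, rfl⟩
      exact ⟨-p, -s, neg_mem_z1 hs, by rw [neg_zsmul]; abel⟩
    · rintro u v ⟨p, s, hs, rfl⟩ ⟨p', s', hs', rfl⟩
      refine ⟨p + p', s + s' + (p * p') • bstar z z, add_mem_z1 (add_mem_z1 hs hs') (hwq _), ?_⟩
      rw [mul_eq', hbb p _ hs p' _ hs', add_zsmul]
      abel
    · rintro u ⟨p, s, hs, rfl⟩
      have huZ2 : p • z + s ∈ zetaNat A 2 := hJZ2 _ ⟨p, s, hs, rfl⟩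
      refine ⟨-p, -s + (p * p) • bstar z z, add_mem_z1 (neg_mem_z1 hs) (hwq _), ?_⟩
      rw [inv_eq_z2 huZ2, hbb p _ hs p _ hs, neg_zsmul]
      abel
  have hJideal : IsIdeal {y : A | ∃ (p : ℤ) (s : A), s ∈ zetaNat A 1 ∧ y = p • z + s} := by
    refine ⟨Set.subset_univ _, hJsub, ⟨Set.mem_univ 0,
      fun _ _ => Set.mem_univ _, fun _ => Set.mem_univ _,
      fun _ _ => Set.mem_univ _, fun _ => Set.mem_univ _⟩, ?_, ?_⟩
    · rintro x' - y ⟨p, s, hs, rfl⟩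
      refine ⟨0, bstar x' (p • z + s), ?_, by rw [zero_zsmul, zero_add]⟩
      rw [bstar_affR x' p hs]
      exact zsmul_mem_z1 (bstar_memz1_right hz x') p
    · rintro x' - y ⟨p, s, hs, rfl⟩
      refine ⟨0, bstar (p • z + s) x', ?_, by rw [zero_zsmul, zero_add]⟩
      rw [bstar_affL hz p hs]
      exact zsmul_mem_z1 (bstar_memz1_left hz x') p
  have hIJin : IsIdealIn {y : A | ∃ p q : ℤ, y = p • z + q • bstar z z}
      {y : A | ∃ (p : ℤ) (s : A), s ∈ zetaNat A 1 ∧ y = p • z + s} := by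
    refine ⟨hIJ, hIsub, hJsub, ?_, ?_⟩
    · rintro y ⟨p, s, hs, rfl⟩ u ⟨p', q', rfl⟩
      refine ⟨0, p * p', ?_⟩
      rw [hbb p _ hs p' _ (hwq q'), zero_zsmul, zero_add]
    · rintro y ⟨p, s, hs, rfl⟩ u ⟨p', q', rfl⟩
      refine ⟨0, p' * p, ?_⟩
      rw [hbb p' _ (hwq q') p _ hs, zero_zsmul, zero_add]
  have hIdeal := hT _ _ hIJin hJideal
  have hzI : z ∈ {y : A | ∃ p q : ℤ, y = p • z + q • bstar z z} :=
    ⟨1, 0, by rw [one_zsmul, zero_zsmul, add_zero]⟩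
  exact ⟨hIdeal.star_mem_left x (Set.mem_univ x) z hzI,
    hIdeal.star_mem_right x (Set.mem_univ x) z hzI⟩

private lemma star_mem_single (hT : IsTBrace A) (hz : z ∈ zetaNat A 2)
    (hz1 : ∀ t : ℤ, t • z ∈ zetaNat A 1 → t = 0) (x : A) :
    (∃ q : ℤ, bstar x z = q • bstar z z) ∧ (∃ q : ℤ, bstar z x = q • bstar z z) := by
  obtain ⟨⟨p, q, h1⟩, ⟨p', q', h2⟩⟩ := star_mem_cyclic hT hz x
  have hp : p = 0 := by
    apply hz1
    have e : p • z = bstar x z + -(q • bstar z z) := by rw [h1]; abel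
    rw [e]
    exact add_mem_z1 (bstar_memz1_right hz x) (neg_mem_z1 (zsmul_mem_z1 (bstar_memz1_left hz z) q))
  have hp' : p' = 0 := by
    apply hz1
    have e : p' • z = bstar z x + -(q' • bstar z z) := by rw [h2]; abel
    rw [e]
    exact add_mem_z1 (bstar_memz1_left hz x) (neg_mem_z1 (zsmul_mem_z1 (bstar_memz1_left hz z) q'))
  exact ⟨⟨q, by rw [h1, hp, zero_zsmul, zero_add]⟩,
    ⟨q', by rw [h2, hp', zero_zsmul, zero_add]⟩⟩

end Ideal

end LeftBrace

open LeftBrace in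
/-- **Lemma.** Let `A` be a T-brace and `a ∈ ζ₂(⋆,A)` of finite additive order.  If the
additive group of `ζ₂(⋆,A)` is not periodic, then `x ⋆ a, a ⋆ x ∈ ⟨a ⋆ a⟩` for all
`x ∈ A`. -/
theorem bstar_mem_zmultiples_of_finite_order
    {A : Type u} [LeftBrace A] (hT : IsTBrace A) (a : A) (ha : a ∈ zetaNat A 2)
    (hord : IsOfFinAddOrder a)
    (hnp : ¬ ∀ x ∈ zetaNat A 2, IsOfFinAddOrder x) :
    ∀ x : A, bstar x a ∈ AddSubgroup.zmultiples (bstar a a) ∧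
      bstar a x ∈ AddSubgroup.zmultiples (bstar a a) := by
  classical
  obtain ⟨n, hn0, hna⟩ := isOfFinAddOrder_iff_nsmul_eq_zero.mp hord
  have hnz : ((n : ℤ)) • a = 0 := by rw [natCast_zsmul, hna]
  have hnZ : ((n : ℤ)) ≠ 0 := Int.natCast_ne_zero.mpr hn0.ne'
  push_neg at hnp
  obtain ⟨b, hbZ2, hbord⟩ := hnp
  have htor1 : ∀ y : A, ((n : ℤ)) • bstar y a = 0 := fun y => by
    rw [← bstar_zsmul_right, hnz, bstar_zero_right]
  have htor2 : ∀ y : A, ((n : ℤ)) • bstar a y = 0 := fun y => by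
    rw [← bstar_zsmul_left_z2 ha, hnz, bstar_zero_left]
  intro x
  rw [AddSubgroup.mem_zmultiples_iff, AddSubgroup.mem_zmultiples_iff]
  by_cases hcase : ∃ t : ℤ, t ≠ 0 ∧ t • b ∈ zetaNat A 1
  · -- Case 1 : some nonzero multiple of b lies in ζ₁
    obtain ⟨t, ht0, htb⟩ := hcase
    have hzZ2 : a + t • b ∈ zetaNat A 2 := add_mem_z2 ha (z1_subset_z2 htb)
    have hzz : bstar (a + t • b) (a + t • b) = bstar a a := by
      rw [add_comm a (t • b), bstar_z1_add_left htb, bstar_add_right,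
        bstar_right_z1 htb, zero_add]
    have hxz : ∀ y : A, bstar y (a + t • b) = bstar y a := fun y => by
      rw [bstar_add_right, bstar_right_z1 htb, add_zero]
    have hzx : ∀ y : A, bstar (a + t • b) y = bstar a y := fun y => by
      rw [add_comm a (t • b), bstar_z1_add_left htb]
    obtain ⟨⟨p, q, h1⟩, ⟨p', q', h2⟩⟩ := star_mem_cyclic hT hzZ2 x
    rw [hxz x, hzz] at h1
    rw [hzx x, hzz] at h2
    have kill : ∀ (c : A) (p q : ℤ), ((n : ℤ)) • c = 0 →
        c = p • (a + t • b) + q • bstar a a → ∃ k : ℤ, k • bstar a a = c := by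
      intro c p q hc hEq
      have step1 : ((n : ℤ) * p) • (a + t • b) + ((n : ℤ) * q) • bstar a a = 0 := by
        rw [mul_zsmul, mul_zsmul, ← zsmul_add, ← hEq]
        exact hc
      have step2 : ((n : ℤ) * ((n : ℤ) * p)) • (a + t • b) = 0 := by
        have h5 : ((n : ℤ)) • (((n : ℤ) * p) • (a + t • b) + ((n : ℤ) * q) • bstar a a)
            = 0 := by rw [step1, zsmul_zero]
        rw [zsmul_add, ← mul_zsmul, ← mul_zsmul] at h5
        have h6 : ((n : ℤ) * ((n : ℤ) * q)) • bstar a a = 0 := by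
          rw [show (n : ℤ) * ((n : ℤ) * q) = ((n : ℤ) * q) * (n : ℤ) by ring,
            mul_zsmul, htor1 a, zsmul_zero]
        rw [h6, add_zero] at h5
        exact h5
      rw [zsmul_add] at step2
      have h7 : ((n : ℤ) * ((n : ℤ) * p)) • a = 0 := by
        rw [show (n : ℤ) * ((n : ℤ) * p) = ((n : ℤ) * p) * (n : ℤ) by ring,
          mul_zsmul, hnz, zsmul_zero]
      rw [h7, zero_add, ← mul_zsmul] at step2
      have h8 : (n : ℤ) * ((n : ℤ) * p) * t = 0 := zsmul_eq_zero' hbord step2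
      have h9 : (n : ℤ) * ((n : ℤ) * p) = 0 := by
        rcases mul_eq_zero.mp h8 with h | h
        · exact h
        · exact absurd h ht0
      have h10 : (n : ℤ) * p = 0 := by
        rcases mul_eq_zero.mp h9 with h | h
        · exact absurd h hnZ
        · exact h
      have hp : p = 0 := by
        rcases mul_eq_zero.mp h10 with h | h
        · exact absurd h hnZ
        · exact h
      exact ⟨q, by rw [hEq, hp, zero_zsmul, zero_add]⟩
    exact ⟨kill (bstar x a) p q (htor1 x) h1, kill (bstar a x) p' q' (htor2 x) h2⟩
  · -- Case 2 : no nonzero multiple of b lies in ζ₁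
    have hb1 : ∀ t : ℤ, t • b ∈ zetaNat A 1 → t = 0 := by
      intro t ht
      by_contra h0
      exact hcase ⟨t, h0, ht⟩
    have habZ2 : a + b ∈ zetaNat A 2 := add_mem_z2 ha hbZ2
    have hab1 : ∀ t : ℤ, t • (a + b) ∈ zetaNat A 1 → t = 0 := by
      intro t ht
      have h3 := zsmul_mem_z1 ht ((n : ℤ))
      rw [← mul_zsmul, zsmul_add] at h3
      have h4 : ((n : ℤ) * t) • a = 0 := by
        rw [show (n : ℤ) * t = t * (n : ℤ) by ring, mul_zsmul, hnz, zsmul_zero]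
      rw [h4, zero_add] at h3
      have h5 := hb1 _ h3
      rcases mul_eq_zero.mp h5 with h | h
      · exact absurd h hnZ
      · exact h
    -- bstar b b has infinite additive order
    have hbbord : ¬ IsOfFinAddOrder (bstar b b) := by
      intro hfin
      obtain ⟨N, hN0, hNbb⟩ := isOfFinAddOrder_iff_nsmul_eq_zero.mp hfin
      have hNz : ((N : ℤ)) ≠ 0 := Int.natCast_ne_zero.mpr hN0.ne'
      have huZ2 : ((N : ℤ)) • b ∈ zetaNat A 2 := zsmul_mem_z2 hbZ2 _
      have hu1 : ∀ t : ℤ, t • (((N : ℤ)) • b) ∈ zetaNat A 1 → t = 0 := by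
        intro t ht
        rw [← mul_zsmul] at ht
        have h5 := hb1 _ ht
        rcases mul_eq_zero.mp h5 with h | h
        · exact h
        · exact absurd h hNz
      have huu : bstar (((N : ℤ)) • b) (((N : ℤ)) • b) = 0 := by
        rw [bstar_zsmul_right, bstar_zsmul_left_z2 hbZ2]
        have h6 : ((N : ℤ)) • bstar b b = 0 := by rw [natCast_zsmul, hNbb]
        rw [h6, zsmul_zero]
      have huZ1 : ((N : ℤ)) • b ∈ zetaNat A 1 := by
        rw [mem_z1]
        intro y
        obtain ⟨⟨qx, hx1⟩, ⟨qx', hx2⟩⟩ := star_mem_single hT huZ2 hu1 y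
        exact ⟨by rw [hx2, huu, zsmul_zero], by rw [hx1, huu, zsmul_zero]⟩
      exact hNz (hb1 _ huZ1)
    have key_b := star_mem_single hT hbZ2 hb1
    have hab0 : bstar a b = 0 := by
      obtain ⟨⟨q, hq⟩, -⟩ := key_b a
      have h0 : ((n : ℤ) * q) • bstar b b = 0 := by
        rw [mul_zsmul, ← hq]
        exact htor2 b
      have h1 := zsmul_eq_zero' hbbord h0
      have hq0 : q = 0 := by
        rcases mul_eq_zero.mp h1 with h | h
        · exact absurd h hnZ
        · exact h
      rw [hq, hq0, zero_zsmul]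
    have hba0 : bstar b a = 0 := by
      obtain ⟨-, ⟨q, hq⟩⟩ := key_b a
      have h0 : ((n : ℤ) * q) • bstar b b = 0 := by
        rw [mul_zsmul, ← hq]
        exact htor1 b
      have h1 := zsmul_eq_zero' hbbord h0
      have hq0 : q = 0 := by
        rcases mul_eq_zero.mp h1 with h | h
        · exact absurd h hnZ
        · exact h
      rw [hq, hq0, zero_zsmul]
    have hc : bstar (a + b) (a + b) = bstar a a + bstar b b := by
      rw [bstar_add_left_z2 ha hbZ2, bstar_add_right, bstar_add_right, hab0, hba0,
        add_zero, zero_add]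
    have key_ab := star_mem_single hT habZ2 hab1
    constructor
    · obtain ⟨⟨φ, hφ⟩, -⟩ := key_ab x
      obtain ⟨⟨γ, hγ⟩, -⟩ := key_b x
      have hx : bstar x a = φ • bstar a a + (φ - γ) • bstar b b := by
        have e : bstar x a + bstar x b = φ • (bstar a a + bstar b b) := by
          rw [← bstar_add_right, hφ, hc]
        rw [hγ, zsmul_add] at e
        have e2 : bstar x a = φ • bstar a a + φ • bstar b b - γ • bstar b b := by
          rw [← e]; abel
        rw [e2, sub_zsmul]; abel
      have h0 : ((n : ℤ) * (φ - γ)) • bstar b b = 0 := by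
        have e2 : ((n : ℤ)) • bstar x a
            = ((n : ℤ) * φ) • bstar a a + ((n : ℤ) * (φ - γ)) • bstar b b := by
          rw [hx, zsmul_add, ← mul_zsmul, ← mul_zsmul]
        rw [htor1 x] at e2
        have e3 : ((n : ℤ) * φ) • bstar a a = 0 := by
          rw [show (n : ℤ) * φ = φ * (n : ℤ) by ring, mul_zsmul, htor1 a, zsmul_zero]
        rw [e3, zero_add] at e2
        exact e2.symm
      have hφγ : φ - γ = 0 := by
        have h1 := zsmul_eq_zero' hbbord h0
        rcases mul_eq_zero.mp h1 with h | h
        · exact absurd h hnZ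
        · exact h
      exact ⟨φ, by rw [hx, hφγ, zero_zsmul, add_zero]⟩
    · obtain ⟨-, ⟨φ, hφ⟩⟩ := key_ab x
      obtain ⟨-, ⟨γ, hγ⟩⟩ := key_b x
      have hx : bstar a x = φ • bstar a a + (φ - γ) • bstar b b := by
        have e : bstar a x + bstar b x = φ • (bstar a a + bstar b b) := by
          rw [← bstar_add_left_z2 ha hbZ2, hφ, hc]
        rw [hγ, zsmul_add] at e
        have e2 : bstar a x = φ • bstar a a + φ • bstar b b - γ • bstar b b := by
          rw [← e]; abel
        rw [e2, sub_zsmul]; abel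
      have h0 : ((n : ℤ) * (φ - γ)) • bstar b b = 0 := by
        have e2 : ((n : ℤ)) • bstar a x
            = ((n : ℤ) * φ) • bstar a a + ((n : ℤ) * (φ - γ)) • bstar b b := by
          rw [hx, zsmul_add, ← mul_zsmul, ← mul_zsmul]
        rw [htor2 x] at e2
        have e3 : ((n : ℤ) * φ) • bstar a a = 0 := by
          rw [show (n : ℤ) * φ = φ * (n : ℤ) by ring, mul_zsmul, htor1 a, zsmul_zero]
        rw [e3, zero_add] at e2
        exact e2.symm
      have hφγ : φ - γ = 0 := by
        have h1 := zsmul_eq_zero' hbbord h0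
        rcases mul_eq_zero.mp h1 with h | h
        · exact absurd h hnZ
        · exact h
      exact ⟨φ, by rw [hx, hφγ, zero_zsmul, add_zero]⟩
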